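/- Equilibria are monotone in B: if B¹_i ⪯ B²_i for all i ∈ I (each B^m_i ∈ S_≻^{H_i}), and X¹, X² are the unique equilibria (fixed points of the corresponding maps F¹, F²), then X¹_i ⪯ X²_i for all i. -/

import Mathlib

open Matrix BigOperators Filter Topology
set_option linter.unusedSectionVars false
set_option linter.unusedVariables false
set_option maxHeartbeats 1000000

/-- Orthogonal projection onto the coordinate subspace determined by `S`. -/
noncomputable def proj (K : Type*) [Fintype K] [DecidableEq K] (S : Finset K) :
    Matrix K K ℝ :=
  Matrix.diagonal (fun k => if k ∈ S then (1 : ℝ) else 0)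

/-- `B ∈ S_≻^{H}` : symmetric nonnegative definite, vanishing on vectors orthogonal
to the coordinate subspace `H` given by `S`, and strictly positive definite on `H`. -/
def SPDOn {K : Type*} [Fintype K] [DecidableEq K] (S : Finset K) (B : Matrix K K ℝ) : Prop :=
  B.PosSemidef ∧
  (∀ x : K → ℝ, (∀ j, j ∉ S → x j = 0) → x ≠ 0 → 0 < x ⬝ᵥ (B *ᵥ x)) ∧
  (∀ x : K → ℝ, (∀ j, j ∈ S → x j = 0) → B *ᵥ x = 0)

/-- The inverse of `B` computed on the coordinate subspace given by `S`, extended by zero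
(`B^{-H}` in the paper). -/
noncomputable def invOn {K : Type*} [Fintype K] [DecidableEq K] (S : Finset K)
    (B : Matrix K K ℝ) : Matrix K K ℝ :=
  proj K S * (B + proj K Sᶜ)⁻¹ * proj K S

/-- `A ≺_{H} B` : the difference `B - A` belongs to `S_≻^{H}`. -/
def ltOn {K : Type*} [Fintype K] [DecidableEq K] (S : Finset K) (A B : Matrix K K ℝ) : Prop :=
  SPDOn S (B - A)

/-- The best-response map `F_i(X) = (B_i^{-H_i} + π_i (X_{-i})⁻¹ π_i)^{-H_i}`. -/
noncomputable def Fmap {I K : Type*} [Fintype I] [DecidableEq I] [Fintype K] [DecidableEq K]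
    (Ki : I → Finset K) (B : I → Matrix K K ℝ) (X : I → Matrix K K ℝ) (i : I) :
    Matrix K K ℝ :=
  invOn (Ki i) (invOn (Ki i) (B i) +
    proj K (Ki i) * (∑ j ∈ Finset.univ.erase i, X j)⁻¹ * proj K (Ki i))

section Aux
lemma psd_smul {K : Type*} [Fintype K] (c : ℝ) (hc : 0 ≤ c) {M : Matrix K K ℝ} (h : M.PosSemidef) : (c • M).PosSemidef := by
  refine PosSemidef.of_dotProduct_mulVec_nonneg ?_ (fun x => ?_)
  · show (c • M)ᴴ = c • M
    rw [conjTranspose_smul, h.1]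
    simp
  · have := h.dotProduct_mulVec_nonneg x
    simp only [smul_mulVec, dotProduct_smul, smul_eq_mul] at *
    positivity

variable {K : Type*} [Fintype K] [DecidableEq K] {S : Finset K}


lemma proj_transpose : (proj K S)ᵀ = proj K S := by simp [proj]

lemma proj_conjTranspose : (proj K S)ᴴ = proj K S := by simp [proj, star]

lemma proj_mul_proj : proj K S * proj K S = proj K S := by
  ext i j
  rcases eq_or_ne i j with rfl | hij
  · by_cases h : i ∈ S <;> simp [proj, diagonal_mul_diagonal, diagonal_apply, h]
  · simp [proj, diagonal_mul_diagonal, diagonal_apply, hij]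

lemma proj_mulVec (x : K → ℝ) : proj K S *ᵥ x = fun k => if k ∈ S then x k else 0 := by
  funext k; simp [proj, mulVec_diagonal, ite_mul]

lemma proj_psd : (proj K S).PosSemidef := by
  apply Matrix.PosSemidef.diagonal
  intro k; by_cases h : k ∈ S <;> simp [h]

lemma proj_mul_compl : proj K S * proj K Sᶜ = 0 := by
  simp only [proj, diagonal_mul_diagonal]
  ext i j
  by_cases h : i ∈ S <;> simp [diagonal, Matrix.diagonal_apply, h]

lemma compl_mul_proj : proj K Sᶜ * proj K S = 0 := by
  simp only [proj, diagonal_mul_diagonal]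
  ext i j
  by_cases h : i ∈ S <;> simp [diagonal, Matrix.diagonal_apply, h]

lemma proj_add_compl : proj K S + proj K Sᶜ = 1 := by
  ext i j
  rcases eq_or_ne i j with rfl | hij
  · by_cases h : i ∈ S <;> simp [proj, diagonal_apply, one_apply, h]
  · simp [proj, diagonal_apply, one_apply, hij]

-- support lemmas
lemma SPDOn.symm (h : SPDOn S (B : Matrix K K ℝ)) : B.IsHermitian := h.1.1

lemma SPDOn.col_zero {B : Matrix K K ℝ} (h : SPDOn S B) {j : K} (hj : j ∉ S) (i : K) :
    B i j = 0 := by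
  have h3 := h.2.2 (Pi.single j 1) (fun k hk => by
    rw [Pi.single_apply]
    split
    · subst ‹k = j›; exact absurd hk hj
    · rfl)
  have := congrFun h3 i
  simpa [mulVec_single] using this

lemma SPDOn.row_zero {B : Matrix K K ℝ} (h : SPDOn S B) {i : K} (hi : i ∉ S) (j : K) :
    B i j = 0 := by
  have h0 := h.col_zero hi j
  have hsym : B i j = B j i := by
    have := congrFun (congrFun h.1.1 j) i
    simpa [conjTranspose_apply, star] using this
  rw [hsym]
  exact h0

lemma SPDOn.mul_proj {B : Matrix K K ℝ} (h : SPDOn S B) : B * proj K S = B := by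
  ext i j
  rw [proj, mul_diagonal]
  by_cases hj : j ∈ S
  · simp [hj]
  · simp [hj, h.col_zero hj i]

lemma SPDOn.proj_mul {B : Matrix K K ℝ} (h : SPDOn S B) : proj K S * B = B := by
  ext i j
  rw [proj, diagonal_mul]
  by_cases hi : i ∈ S
  · simp [hi]
  · simp [hi, h.row_zero hi j]

-- quadratic form of proj
lemma dot_proj_nonneg (x : K → ℝ) : 0 ≤ x ⬝ᵥ (proj K S *ᵥ x) := by
  simp only [proj, mulVec_diagonal, dotProduct]
  apply Finset.sum_nonneg
  intro k _
  by_cases h : k ∈ S <;> simp [h, mul_self_nonneg]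

lemma SPDOn.posdef_add_compl {B : Matrix K K ℝ} (h : SPDOn S B) : (B + proj K Sᶜ).PosDef := by
  refine PosDef.of_dotProduct_mulVec_pos ?_ ?_
  · show (B + proj K Sᶜ)ᴴ = _
    rw [conjTranspose_add, h.1.1, (proj_psd).1]
  · intro x hx
    have key : (0 : ℝ) < x ⬝ᵥ (B *ᵥ x) + x ⬝ᵥ (proj K Sᶜ *ᵥ x) := by
      by_cases hsupp : ∀ j, j ∉ S → x j = 0
      · have h1 := h.2.1 x hsupp hx
        have h2 := dot_proj_nonneg (S := Sᶜ) x
        linarith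
      · push_neg at hsupp
        obtain ⟨j, hj, hxj⟩ := hsupp
        have h1 := h.1.dotProduct_mulVec_nonneg x
        have h2 : 0 < x ⬝ᵥ (proj K Sᶜ *ᵥ x) := by
          simp only [proj, mulVec_diagonal, dotProduct]
          apply Finset.sum_pos' (fun k _ => by
            by_cases hk : k ∈ Sᶜ <;> simp [hk, mul_self_nonneg])
          refine ⟨j, Finset.mem_univ j, ?_⟩
          simp only [Finset.mem_compl, hj, not_false_iff, if_pos, one_mul]
          exact mul_self_pos.mpr hxj
        have h1' : 0 ≤ x ⬝ᵥ (B *ᵥ x) := by simpa using h1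
        linarith
    simpa [add_mulVec, dotProduct_add] using key


theorem Matrix.PosDef.isUnit_det' {M : Matrix K K ℝ} (hM : M.PosDef) : IsUnit M.det :=
  isUnit_iff_ne_zero.mpr hM.det_pos.ne'

lemma SPDOn.compl_mul {B : Matrix K K ℝ} (h : SPDOn S B) : proj K Sᶜ * B = 0 := by
  have e1 : proj K Sᶜ = 1 - proj K S := by rw [← proj_add_compl (S := S), add_sub_cancel_left]
  rw [e1, Matrix.sub_mul, Matrix.one_mul, h.proj_mul, sub_self]

lemma SPDOn.mul_compl {B : Matrix K K ℝ} (h : SPDOn S B) : B * proj K Sᶜ = 0 := by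
  have e1 : proj K Sᶜ = 1 - proj K S := by rw [← proj_add_compl (S := S), add_sub_cancel_left]
  rw [e1, Matrix.mul_sub, Matrix.mul_one, h.mul_proj, sub_self]

lemma SPDOn.compl_mul_C {B : Matrix K K ℝ} (h : SPDOn S B) :
    proj K Sᶜ * (B + proj K Sᶜ) = proj K Sᶜ := by
  rw [Matrix.mul_add, h.compl_mul, proj_mul_proj, zero_add]

lemma SPDOn.C_mul_compl {B : Matrix K K ℝ} (h : SPDOn S B) :
    (B + proj K Sᶜ) * proj K Sᶜ = proj K Sᶜ := by
  rw [Matrix.add_mul, h.mul_compl, proj_mul_proj, zero_add]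

lemma SPDOn.compl_mul_inv {B : Matrix K K ℝ} (h : SPDOn S B) :
    proj K Sᶜ * (B + proj K Sᶜ)⁻¹ = proj K Sᶜ := by
  have hd := h.posdef_add_compl.isUnit_det'
  calc proj K Sᶜ * (B + proj K Sᶜ)⁻¹
      = (proj K Sᶜ * (B + proj K Sᶜ)) * (B + proj K Sᶜ)⁻¹ := by
        rw [h.compl_mul_C]
    _ = proj K Sᶜ * ((B + proj K Sᶜ) * (B + proj K Sᶜ)⁻¹) := by rw [Matrix.mul_assoc]
    _ = proj K Sᶜ := by rw [Matrix.mul_nonsing_inv _ hd, Matrix.mul_one]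

lemma SPDOn.inv_mul_compl {B : Matrix K K ℝ} (h : SPDOn S B) :
    (B + proj K Sᶜ)⁻¹ * proj K Sᶜ = proj K Sᶜ := by
  have hd := h.posdef_add_compl.isUnit_det'
  calc (B + proj K Sᶜ)⁻¹ * proj K Sᶜ
      = (B + proj K Sᶜ)⁻¹ * ((B + proj K Sᶜ) * proj K Sᶜ) := by rw [h.C_mul_compl]
    _ = ((B + proj K Sᶜ)⁻¹ * (B + proj K Sᶜ)) * proj K Sᶜ := by rw [Matrix.mul_assoc]
    _ = proj K Sᶜ := by rw [Matrix.nonsing_inv_mul _ hd, Matrix.one_mul]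

lemma SPDOn.inv_comm {B : Matrix K K ℝ} (h : SPDOn S B) :
    (B + proj K Sᶜ)⁻¹ * proj K S = proj K S * (B + proj K Sᶜ)⁻¹ := by
  have e1 : proj K S = 1 - proj K Sᶜ := by rw [← proj_add_compl (S := S), add_sub_cancel_right]
  rw [e1, Matrix.mul_sub, Matrix.sub_mul, Matrix.mul_one, Matrix.one_mul,
    h.inv_mul_compl, h.compl_mul_inv]

lemma SPDOn.invOn_eq {B : Matrix K K ℝ} (h : SPDOn S B) :
    invOn S B = (B + proj K Sᶜ)⁻¹ * proj K S := by
  rw [invOn, ← h.inv_comm, Matrix.mul_assoc, proj_mul_proj]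

lemma SPDOn.invOn_eq' {B : Matrix K K ℝ} (h : SPDOn S B) :
    invOn S B = proj K S * (B + proj K Sᶜ)⁻¹ := by
  rw [h.invOn_eq, h.inv_comm]

lemma SPDOn.mul_invOn {B : Matrix K K ℝ} (h : SPDOn S B) :
    B * invOn S B = proj K S := by
  have hd := h.posdef_add_compl.isUnit_det'
  have hBC : B * (B + proj K Sᶜ)⁻¹ = 1 - proj K Sᶜ := by
    have : B = (B + proj K Sᶜ) - proj K Sᶜ := by rw [add_sub_cancel_right]
    nth_rewrite 1 [this]
    rw [Matrix.sub_mul, Matrix.mul_nonsing_inv _ hd, h.compl_mul_inv]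
  rw [h.invOn_eq, ← Matrix.mul_assoc, hBC, Matrix.sub_mul, Matrix.one_mul,
    compl_mul_proj, sub_zero]

lemma SPDOn.invOn_mul {B : Matrix K K ℝ} (h : SPDOn S B) :
    invOn S B * B = proj K S := by
  have hd := h.posdef_add_compl.isUnit_det'
  have hCB : (B + proj K Sᶜ)⁻¹ * B = 1 - proj K Sᶜ := by
    have : B = (B + proj K Sᶜ) - proj K Sᶜ := by rw [add_sub_cancel_right]
    nth_rewrite 2 [this]
    rw [Matrix.mul_sub, Matrix.nonsing_inv_mul _ hd, h.inv_mul_compl]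
  rw [h.invOn_eq', Matrix.mul_assoc, hCB, Matrix.mul_sub, Matrix.mul_one,
    proj_mul_compl, sub_zero]

lemma SPDOn.invOn_sandwich {B : Matrix K K ℝ} (h : SPDOn S B) :
    proj K S * invOn S B * proj K S = invOn S B := by
  simp only [invOn, Matrix.mul_assoc, proj_mul_proj]
  simp only [← Matrix.mul_assoc, proj_mul_proj]

lemma SPDOn.invOn_uniq {B A' : Matrix K K ℝ} (h : SPDOn S B)
    (h1 : B * A' = proj K S) (h2 : proj K S * A' * proj K S = A') :
    invOn S B = A' := by
  have hd := h.posdef_add_compl.isUnit_det'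
  have hcompl : proj K Sᶜ * A' = 0 := by
    rw [← h2, ← Matrix.mul_assoc, ← Matrix.mul_assoc, compl_mul_proj, Matrix.zero_mul,
      Matrix.zero_mul]
  have : (B + proj K Sᶜ) * A' = proj K S := by
    rw [Matrix.add_mul, h1, hcompl, add_zero]
  calc invOn S B = (B + proj K Sᶜ)⁻¹ * proj K S := h.invOn_eq
    _ = (B + proj K Sᶜ)⁻¹ * ((B + proj K Sᶜ) * A') := by rw [this]
    _ = A' := by rw [← Matrix.mul_assoc, Matrix.nonsing_inv_mul _ hd, Matrix.one_mul]

lemma proj_mulVec_self {x : K → ℝ} (hx : ∀ j, j ∉ S → x j = 0) : proj K S *ᵥ x = x := by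
  funext k
  rw [proj_mulVec]
  by_cases h : k ∈ S
  · simp [h]
  · simp [h, (hx k h).symm]

lemma proj_mulVec_zero {x : K → ℝ} (hx : ∀ j, j ∈ S → x j = 0) : proj K S *ᵥ x = 0 := by
  funext k
  rw [proj_mulVec]
  by_cases h : k ∈ S
  · simp [h, hx k h]
  · simp [h]

lemma dot_proj_swap (x y : K → ℝ) :
    x ⬝ᵥ (proj K S *ᵥ y) = (proj K S *ᵥ x) ⬝ᵥ y := by
  simp only [dotProduct, proj, mulVec_diagonal]
  exact Finset.sum_congr rfl (fun k _ => by ring)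

lemma proj_mulVec_support (x : K → ℝ) (j : K) (hj : j ∉ S) : (proj K S *ᵥ x) j = 0 := by
  rw [proj_mulVec]; simp [hj]

lemma SPDOn.invOn_spd {B : Matrix K K ℝ} (h : SPDOn S B) : SPDOn S (invOn S B) := by
  have hCinv := h.posdef_add_compl.inv
  refine ⟨?_, ?_, ?_⟩
  · have := hCinv.posSemidef.mul_mul_conjTranspose_same (proj K S)
    rw [proj_conjTranspose] at this
    exact this
  · intro x hx hx0
    have hpx : proj K S *ᵥ x = x := proj_mulVec_self hx
    have : invOn S B *ᵥ x = proj K S *ᵥ ((B + proj K Sᶜ)⁻¹ *ᵥ x) := by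
      rw [invOn, ← mulVec_mulVec, ← mulVec_mulVec, hpx]
    rw [this, dot_proj_swap, hpx]
    have := hCinv.dotProduct_mulVec_pos hx0
    simpa using this
  · intro x hx
    have hpx : proj K S *ᵥ x = 0 := proj_mulVec_zero hx
    rw [invOn, ← mulVec_mulVec, ← mulVec_mulVec, hpx, mulVec_zero, mulVec_zero]

lemma SPDOn.sandwich {B : Matrix K K ℝ} (h : SPDOn S B) :
    proj K S * B * proj K S = B := by
  rw [Matrix.mul_assoc, h.mul_proj, h.proj_mul]

lemma SPDOn.invOn_invOn {B : Matrix K K ℝ} (h : SPDOn S B) :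
    invOn S (invOn S B) = B :=
  h.invOn_spd.invOn_uniq h.invOn_mul h.sandwich

lemma SPDOn.smul {B : Matrix K K ℝ} (h : SPDOn S B) {c : ℝ} (hc : 0 < c) :
    SPDOn S (c • B) := by
  refine ⟨psd_smul c hc.le h.1, ?_, ?_⟩
  · intro x hx hx0
    have := h.2.1 x hx hx0
    rw [smul_mulVec, dotProduct_smul, smul_eq_mul]
    positivity
  · intro x hx
    rw [smul_mulVec, h.2.2 x hx, smul_zero]

lemma SPDOn.invOn_smul {B : Matrix K K ℝ} (h : SPDOn S B) {c : ℝ} (hc : 0 < c) :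
    invOn S (c • B) = c⁻¹ • invOn S B := by
  refine (h.smul hc).invOn_uniq ?_ ?_
  · rw [Matrix.smul_mul, Matrix.mul_smul, smul_smul, mul_inv_cancel₀ hc.ne', one_smul,
      h.mul_invOn]
  · rw [Matrix.mul_smul, Matrix.smul_mul, h.invOn_spd.sandwich]

lemma SPDOn.add_psd {A Q : Matrix K K ℝ} (hA : SPDOn S A) (hQ : Q.PosSemidef)
    (hQs : proj K S * Q * proj K S = Q) : SPDOn S (A + Q) := by
  refine ⟨hA.1.add hQ, ?_, ?_⟩
  · intro x hx hx0
    have h1 := hA.2.1 x hx hx0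
    have h2 : (0:ℝ) ≤ x ⬝ᵥ (Q *ᵥ x) := by simpa using hQ.dotProduct_mulVec_nonneg x
    rw [add_mulVec, dotProduct_add]
    linarith
  · intro x hx
    have hpx : proj K S *ᵥ x = 0 := proj_mulVec_zero hx
    have hQx : Q *ᵥ x = 0 := by
      rw [← hQs, ← mulVec_mulVec, ← mulVec_mulVec, hpx, mulVec_zero, mulVec_zero]
    rw [add_mulVec, hA.2.2 x hx, hQx, add_zero]

lemma real_transpose_eq {M : Matrix K K ℝ} (hM : M.IsHermitian) : Mᵀ = M := by
  ext i j
  have := congrFun (congrFun hM i) j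
  simpa [conjTranspose_apply, star] using this

lemma dot_symm {M : Matrix K K ℝ} (hM : M.IsHermitian) (a b : K → ℝ) :
    a ⬝ᵥ (M *ᵥ b) = b ⬝ᵥ (M *ᵥ a) := by
  have ht : Mᵀ = M := real_transpose_eq hM
  rw [dotProduct_mulVec a M b, dotProduct_comm]
  congr 1
  nth_rewrite 1 [← ht]
  rw [Matrix.vecMul_transpose]

lemma psd_conj_proj {M : Matrix K K ℝ} (hM : M.PosSemidef) :
    (proj K S * M * proj K S).PosSemidef := by
  have := hM.mul_mul_conjTranspose_same (proj K S)
  rwa [proj_conjTranspose] at this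

lemma inv_quadratic_max {P : Matrix K K ℝ} (hP : P.PosDef) (x y : K → ℝ) :
    2 * (x ⬝ᵥ y) - y ⬝ᵥ (P *ᵥ y) ≤ x ⬝ᵥ (P⁻¹ *ᵥ x) := by
  set w := P⁻¹ *ᵥ x with hw
  have hPP : P *ᵥ w = x := by
    rw [hw, mulVec_mulVec, Matrix.mul_nonsing_inv _ hP.isUnit_det', one_mulVec]
  have h0 : (0:ℝ) ≤ (y - w) ⬝ᵥ (P *ᵥ (y - w)) := by simpa using hP.posSemidef.dotProduct_mulVec_nonneg (y - w)
  have hexp : (y - w) ⬝ᵥ (P *ᵥ (y - w))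
      = y ⬝ᵥ (P *ᵥ y) - y ⬝ᵥ (P *ᵥ w) - w ⬝ᵥ (P *ᵥ y) + w ⬝ᵥ (P *ᵥ w) := by
    rw [mulVec_sub, sub_dotProduct, dotProduct_sub, dotProduct_sub]
    ring
  have hc1 : w ⬝ᵥ (P *ᵥ y) = y ⬝ᵥ (P *ᵥ w) := dot_symm hP.isHermitian w y
  have hc2 : y ⬝ᵥ (P *ᵥ w) = y ⬝ᵥ x := by rw [hPP]
  have hc3 : w ⬝ᵥ (P *ᵥ w) = w ⬝ᵥ x := by rw [hPP]
  have hc4 : y ⬝ᵥ x = x ⬝ᵥ y := dotProduct_comm y x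
  have hc5 : w ⬝ᵥ x = x ⬝ᵥ w := dotProduct_comm w x
  have hc6 : x ⬝ᵥ (P⁻¹ *ᵥ x) = x ⬝ᵥ w := by rw [hw]
  rw [hexp, hc1, hc2, hc3, hc4, hc5] at h0
  linarith [hc6]

lemma inv_antitone {P Q : Matrix K K ℝ} (hP : P.PosDef) (hQ : Q.PosDef)
    (h : (Q - P).PosSemidef) : (P⁻¹ - Q⁻¹).PosSemidef := by
  refine PosSemidef.of_dotProduct_mulVec_nonneg (hP.isHermitian.inv.sub hQ.isHermitian.inv) fun x => ?_
  set y := Q⁻¹ *ᵥ x with hy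
  have hQy : Q *ᵥ y = x := by
    rw [hy, mulVec_mulVec, Matrix.mul_nonsing_inv _ hQ.isUnit_det', one_mulVec]
  have he : x ⬝ᵥ (Q⁻¹ *ᵥ x) = 2 * (x ⬝ᵥ y) - y ⬝ᵥ (Q *ᵥ y) := by
    rw [hQy, ← hy]
    have : y ⬝ᵥ x = x ⬝ᵥ y := dotProduct_comm y x
    rw [this]
    ring
  have hPQ : y ⬝ᵥ (P *ᵥ y) ≤ y ⬝ᵥ (Q *ᵥ y) := by
    have := h.dotProduct_mulVec_nonneg y
    simp only [star_trivial, sub_mulVec, dotProduct_sub] at this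
    linarith
  have hkey := inv_quadratic_max hP x y
  have : x ⬝ᵥ (Q⁻¹ *ᵥ x) ≤ x ⬝ᵥ (P⁻¹ *ᵥ x) := by
    rw [he]
    linarith
  simp only [star_trivial, sub_mulVec, dotProduct_sub]
  linarith

lemma SPDOn.invOn_antitone {A B : Matrix K K ℝ} (hA : SPDOn S A) (hB : SPDOn S B)
    (h : (B - A).PosSemidef) : (invOn S A - invOn S B).PosSemidef := by
  have h' : ((B + proj K Sᶜ) - (A + proj K Sᶜ)).PosSemidef := by
    rw [add_sub_add_right_eq_sub]
    exact h
  have hinv := inv_antitone hA.posdef_add_compl hB.posdef_add_compl h'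
  have hconj := psd_conj_proj (S := S) hinv
  have heq : proj K S * ((A + proj K Sᶜ)⁻¹ - (B + proj K Sᶜ)⁻¹) * proj K S
      = invOn S A - invOn S B := by
    rw [Matrix.mul_sub, Matrix.sub_mul]
    rfl
  rwa [heq] at hconj

lemma dot_sandwich {M : Matrix K K ℝ} (hM : proj K S * M * proj K S = M) (x : K → ℝ) :
    x ⬝ᵥ (M *ᵥ x) = (proj K S *ᵥ x) ⬝ᵥ (M *ᵥ (proj K S *ᵥ x)) := by
  nth_rewrite 1 [← hM]
  rw [← mulVec_mulVec, ← mulVec_mulVec, dot_proj_swap]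

lemma cont_quad (M : Matrix K K ℝ) : Continuous fun x : K → ℝ => x ⬝ᵥ (M *ᵥ x) := by
  simp only [dotProduct, mulVec]
  apply continuous_finset_sum
  intro i _
  exact (continuous_apply i).mul
    (continuous_finset_sum _ fun j _ => continuous_const.mul (continuous_apply j))

lemma cont_dot_self : Continuous fun x : K → ℝ => x ⬝ᵥ x := by
  simp only [dotProduct]
  exact continuous_finset_sum _ fun i _ => (continuous_apply i).mul (continuous_apply i)

lemma dot_self_nonneg (x : K → ℝ) : (0:ℝ) ≤ x ⬝ᵥ x :=
  Finset.sum_nonneg fun i _ => mul_self_nonneg _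

lemma exists_eps {C Q : Matrix K K ℝ} (hC : SPDOn S C) (hQ : Q.PosSemidef)
    (hQs : proj K S * Q * proj K S = Q) : ∃ ε : ℝ, 0 < ε ∧ (C - ε • Q).PosSemidef := by
  classical
  set f : (K → ℝ) → ℝ := fun x => x ⬝ᵥ (C *ᵥ x) with hf
  set g : (K → ℝ) → ℝ := fun x => x ⬝ᵥ (Q *ᵥ x) with hg
  have hQnonneg : ∀ x, (0:ℝ) ≤ g x := fun x => by simpa using hQ.dotProduct_mulVec_nonneg x
  set A : Set (K → ℝ) := {x | (∀ j, j ∉ S → x j = 0) ∧ x ⬝ᵥ x = 1} with hA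
  -- main claim : ∃ ε > 0, ∀ x supported on S, ε * g x ≤ f x
  have main : ∃ ε : ℝ, 0 < ε ∧ ∀ x : K → ℝ, (∀ j, j ∉ S → x j = 0) → ε * g x ≤ f x := by
    by_cases hAne : A.Nonempty
    · have hclosed : IsClosed A := by
        have h1 : IsClosed {x : K → ℝ | ∀ j, j ∉ S → x j = 0} := by
          have he : {x : K → ℝ | ∀ j, j ∉ S → x j = 0} =
              ⋂ (j : K) (_ : j ∉ S), {x : K → ℝ | x j = 0} := by
            ext x; simp
          rw [he]
          exact isClosed_iInter fun j => isClosed_iInter fun _ =>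
            isClosed_eq (continuous_apply j) continuous_const
        have h2 : IsClosed {x : K → ℝ | x ⬝ᵥ x = 1} :=
          isClosed_eq cont_dot_self continuous_const
        exact h1.inter h2
      have hbdd : Bornology.IsBounded A := by
        apply (Metric.isBounded_closedBall (x := (0 : K → ℝ)) (r := 1)).subset
        intro x hx
        simp only [Metric.mem_closedBall, dist_zero_right]
        refine (pi_norm_le_iff_of_nonneg zero_le_one).mpr fun k => ?_
        have hk : x k * x k ≤ x ⬝ᵥ x := by
          have := Finset.single_le_sum (f := fun i => x i * x i)
            (fun i _ => mul_self_nonneg (x i)) (Finset.mem_univ k)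
          simpa [dotProduct] using this
        rw [hx.2] at hk
        rw [Real.norm_eq_abs]
        nlinarith [abs_nonneg (x k), sq_abs (x k)]
      have hcomp : IsCompact A := Metric.isCompact_of_isClosed_isBounded hclosed hbdd
      set φ : (K → ℝ) → ℝ := fun x => f x / (g x + 1) with hφ
      have hcont : ContinuousOn φ A := by
        apply ContinuousOn.div (cont_quad C).continuousOn
          ((cont_quad Q).add continuous_const).continuousOn
        intro x _
        have := hQnonneg x
        exact (show (0:ℝ) < g x + 1 by linarith).ne'
      obtain ⟨x0, hx0A, hx0min'⟩ := hcomp.exists_isMinOn hAne hcont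
      have hx0min : ∀ y ∈ A, φ x0 ≤ φ y := fun y hy => hx0min' hy
      have hx0ne : x0 ≠ 0 := by
        intro h0
        rw [h0] at hx0A
        simp [hA, dotProduct] at hx0A
      have hfx0 : 0 < f x0 := hC.2.1 x0 hx0A.1 hx0ne
      have hm : 0 < φ x0 := by
        have := hQnonneg x0
        apply div_pos hfx0
        positivity
      refine ⟨φ x0, hm, ?_⟩
      intro x hsupp
      rcases eq_or_ne x 0 with rfl | hx0
      · simp [hf, hg]
      · -- normalize
        have hxx : 0 < x ⬝ᵥ x := by
          rcases lt_or_eq_of_le (dot_self_nonneg x) with h3 | h3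
          · exact h3
          · exact absurd ((dotProduct_self_eq_zero).mp h3.symm) hx0
        set r : ℝ := (Real.sqrt (x ⬝ᵥ x))⁻¹ with hr
        have hrpos : 0 < r := by positivity
        have hmem : (r • x) ∈ A := by
          constructor
          · intro j hj; simp [hsupp j hj]
          · show (r • x) ⬝ᵥ (r • x) = 1
            rw [smul_dotProduct, dotProduct_smul, smul_eq_mul, smul_eq_mul, ← mul_assoc,
              ← mul_inv, Real.mul_self_sqrt hxx.le]
            exact inv_mul_cancel₀ hxx.ne'
        have hmin := hx0min _ hmem
        have hfr : f (r • x) = r ^ 2 * f x := by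
          simp only [hf, smul_dotProduct, dotProduct_smul, mulVec_smul, smul_eq_mul]
          ring
        have hgr : g (r • x) = r ^ 2 * g x := by
          simp only [hg, smul_dotProduct, dotProduct_smul, mulVec_smul, smul_eq_mul]
          ring
        have hgrx := hQnonneg (r • x)
        have hφrx : φ x0 ≤ φ (r • x) := hmin
        have h1 : φ x0 * (g (r • x) + 1) ≤ f (r • x) := by
          rw [hφ] at hφrx
          have hpos : 0 < g (r • x) + 1 := by positivity
          calc φ x0 * (g (r • x) + 1) ≤ (f (r • x) / (g (r • x) + 1)) * (g (r • x) + 1) := by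
                apply mul_le_mul_of_nonneg_right hφrx hpos.le
            _ = f (r • x) := div_mul_cancel₀ _ hpos.ne'
        have h2 : φ x0 * g (r • x) ≤ f (r • x) := by nlinarith [hm]
        rw [hfr, hgr] at h2
        have hr2 : 0 < r ^ 2 := by positivity
        nlinarith [h2]
    · -- A empty: all S-supported vectors are zero, so g vanishes on supported vectors
      refine ⟨1, one_pos, ?_⟩
      intro x hsupp
      rcases eq_or_ne x 0 with rfl | hx0
      · simp [hf, hg]
      · exfalso
        apply hAne
        have hxx : 0 < x ⬝ᵥ x := by
          rcases lt_or_eq_of_le (dot_self_nonneg x) with h3 | h3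
          · exact h3
          · exact absurd ((dotProduct_self_eq_zero).mp h3.symm) hx0
        refine ⟨(Real.sqrt (x ⬝ᵥ x))⁻¹ • x, fun j hj => by simp [hsupp j hj], ?_⟩
        show _ ⬝ᵥ _ = 1
        rw [smul_dotProduct, dotProduct_smul, smul_eq_mul, smul_eq_mul, ← mul_assoc,
          ← mul_inv, Real.mul_self_sqrt hxx.le]
        exact inv_mul_cancel₀ hxx.ne'
  obtain ⟨ε, hε, hεle⟩ := main
  refine ⟨ε, hε, PosSemidef.of_dotProduct_mulVec_nonneg ?_ ?_⟩
  · show (C - ε • Q)ᴴ = C - ε • Q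
    rw [conjTranspose_sub, hC.1.1, (psd_smul ε hε.le hQ).1]
  · intro x
    have hsand : proj K S * (C - ε • Q) * proj K S = C - ε • Q := by
      rw [Matrix.mul_sub, Matrix.sub_mul, hC.sandwich, Matrix.mul_smul, Matrix.smul_mul, hQs]
    have hred := dot_sandwich hsand x
    set y := proj K S *ᵥ x with hy
    have hsupp : ∀ j, j ∉ S → y j = 0 := fun j hj => proj_mulVec_support x j hj
    have := hεle y hsupp
    have hexp : y ⬝ᵥ ((C - ε • Q) *ᵥ y) = f y - ε * g y := by
      rw [sub_mulVec, dotProduct_sub, smul_mulVec, dotProduct_smul, smul_eq_mul]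
    simp only [star_trivial]
    rw [hred, hexp]
    linarith

lemma psd_sum {ι : Type*} (s : Finset ι) (M : ι → Matrix K K ℝ)
    (h : ∀ j ∈ s, (M j).PosSemidef) : (∑ j ∈ s, M j).PosSemidef := by
  classical
  induction s using Finset.cons_induction with
  | empty => simpa using Matrix.PosSemidef.zero
  | cons a s ha ih =>
    rw [Finset.sum_cons]
    exact (h a (Finset.mem_cons_self a s)).add (ih fun j hj => h j (Finset.mem_cons_of_mem hj))

lemma sum_mulVec'' {ι : Type*} (s : Finset ι) (M : ι → Matrix K K ℝ) (x : K → ℝ) :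
    (∑ j ∈ s, M j) *ᵥ x = ∑ j ∈ s, (M j *ᵥ x) := by
  classical
  induction s using Finset.cons_induction with
  | empty => simp
  | cons a s ha ih => rw [Finset.sum_cons, Finset.sum_cons, add_mulVec, ih]

lemma posdef_smul {c : ℝ} (hc : 0 < c) {M : Matrix K K ℝ} (h : M.PosDef) :
    (c • M).PosDef := by
  refine PosDef.of_dotProduct_mulVec_pos (psd_smul c hc.le h.posSemidef).1 fun x hx => ?_
  have := h.dotProduct_mulVec_pos hx
  simp only [star_trivial, smul_mulVec, dotProduct_smul, smul_eq_mul] at *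
  positivity

lemma dotProduct_sum'' {ι : Type*} (s : Finset ι) (v : ι → (K → ℝ)) (x : K → ℝ) :
    x ⬝ᵥ (∑ j ∈ s, v j) = ∑ j ∈ s, x ⬝ᵥ v j := by
  classical
  induction s using Finset.cons_induction with
  | empty => simp
  | cons a s ha ih => rw [Finset.sum_cons, Finset.sum_cons, dotProduct_add, ih]

end Aux

lemma sum_posdef {I K : Type*} [Fintype I] [DecidableEq I] [Fintype K] [DecidableEq K]
    (Ki : I → Finset K)
    (hacc : ∀ k : K, 3 ≤ (Finset.univ.filter (fun i : I => k ∈ Ki i)).card)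
    (X : I → Matrix K K ℝ) (hX : ∀ j, SPDOn (Ki j) (X j)) (i : I) :
    (∑ j ∈ Finset.univ.erase i, X j).PosDef := by
  classical
  refine PosDef.of_dotProduct_mulVec_pos ?_ ?_
  · show _ᴴ = _
    rw [conjTranspose_sum]
    exact Finset.sum_congr rfl fun j _ => (hX j).1.1
  · intro x hx
    simp only [star_trivial]
    rw [sum_mulVec'', dotProduct_sum'']
    obtain ⟨k, hk⟩ : ∃ k, x k ≠ 0 := Function.ne_iff.mp hx
    have hcard : 3 ≤ (Finset.univ.filter (fun i : I => k ∈ Ki i)).card := hacc k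
    set F := Finset.univ.filter (fun i : I => k ∈ Ki i) with hF
    have hFne : (F.erase i).Nonempty := by
      rw [← Finset.card_pos]
      by_cases hiF : i ∈ F
      · rw [Finset.card_erase_of_mem hiF]; omega
      · rw [Finset.erase_eq_of_notMem hiF]; omega
    obtain ⟨j, hjF⟩ := hFne
    have hji : j ≠ i := (Finset.mem_erase.mp hjF).1
    have hjk : k ∈ Ki j := by
      have := (Finset.mem_erase.mp hjF).2
      rw [hF] at this
      exact (Finset.mem_filter.mp this).2
    apply Finset.sum_pos'
    · intro l _
      simpa using (hX l).1.dotProduct_mulVec_nonneg x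
    · refine ⟨j, Finset.mem_erase.mpr ⟨hji, Finset.mem_univ j⟩, ?_⟩
      rw [dot_sandwich (hX j).sandwich]
      apply (hX j).2.1
      · intro m hm; exact proj_mulVec_support x m hm
      · intro h0
        apply hk
        have hyk : (proj K (Ki j) *ᵥ x) k = x k := by
          rw [proj_mulVec]; simp [hjk]
        rw [← hyk]
        rw [h0]
        rfl

/-- Equilibria are monotone in `B`: if `B¹ ⪯ B²` componentwise and `X¹, X²` are the
corresponding equilibria, then `X¹ ⪯ X²` componentwise. -/
theorem stmt_12 {I K : Type*} [Fintype I] [DecidableEq I] [Fintype K] [DecidableEq K]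
    (Ki : I → Finset K)
    (hacc : ∀ k : K, 3 ≤ (Finset.univ.filter (fun i : I => k ∈ Ki i)).card)
    (B1 B2 : I → Matrix K K ℝ)
    (hB1 : ∀ i, SPDOn (Ki i) (B1 i)) (hB2 : ∀ i, SPDOn (Ki i) (B2 i))
    (hB : ∀ i, (B2 i - B1 i).PosSemidef)
    (X1 X2 : I → Matrix K K ℝ)
    (hX1 : ∀ i, SPDOn (Ki i) (X1 i)) (hX2 : ∀ i, SPDOn (Ki i) (X2 i))
    (hfix1 : ∀ i, X1 i = Fmap Ki B1 X1 i) (hfix2 : ∀ i, X2 i = Fmap Ki B2 X2 i) :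
    ∀ i, (X2 i - X1 i).PosSemidef := by
  classical
  cases isEmpty_or_nonempty I with
  | inl hIempty => intro i; exact (IsEmpty.false i).elim
  | inr hI =>
  set SX : I → Matrix K K ℝ := fun i => ∑ j ∈ Finset.univ.erase i, X1 j with hSXdef
  set SY : I → Matrix K K ℝ := fun i => ∑ j ∈ Finset.univ.erase i, X2 j with hSYdef
  have hSX : ∀ i, (SX i).PosDef := fun i => sum_posdef Ki hacc X1 hX1 i
  have hSY : ∀ i, (SY i).PosDef := fun i => sum_posdef Ki hacc X2 hX2 i
  set Q : I → Matrix K K ℝ := fun i => proj K (Ki i) * (SX i)⁻¹ * proj K (Ki i) with hQdef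
  set R : I → Matrix K K ℝ := fun i => proj K (Ki i) * (SY i)⁻¹ * proj K (Ki i) with hRdef
  have hQpsd : ∀ i, (Q i).PosSemidef := fun i => psd_conj_proj (hSX i).inv.posSemidef
  have hRpsd : ∀ i, (R i).PosSemidef := fun i => psd_conj_proj (hSY i).inv.posSemidef
  have hQsand : ∀ i, proj K (Ki i) * Q i * proj K (Ki i) = Q i := by
    intro i
    show proj K (Ki i) * (proj K (Ki i) * (SX i)⁻¹ * proj K (Ki i)) * proj K (Ki i) = _
    simp only [← Matrix.mul_assoc, proj_mul_proj]
    simp only [Matrix.mul_assoc, proj_mul_proj]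
    rw [← Matrix.mul_assoc]
  have hRsand : ∀ i, proj K (Ki i) * R i * proj K (Ki i) = R i := by
    intro i
    show proj K (Ki i) * (proj K (Ki i) * (SY i)⁻¹ * proj K (Ki i)) * proj K (Ki i) = _
    simp only [← Matrix.mul_assoc, proj_mul_proj]
    simp only [Matrix.mul_assoc, proj_mul_proj]
    rw [← Matrix.mul_assoc]
  have hA1 : ∀ i, invOn (Ki i) (X1 i) = invOn (Ki i) (B1 i) + Q i := by
    intro i
    have hG : SPDOn (Ki i) (invOn (Ki i) (B1 i) + Q i) :=
      (hB1 i).invOn_spd.add_psd (hQpsd i) (hQsand i)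
    have hF : Fmap Ki B1 X1 i = invOn (Ki i) (invOn (Ki i) (B1 i) + Q i) := rfl
    rw [hfix1 i, hF]
    exact hG.invOn_invOn
  have hA2 : ∀ i, invOn (Ki i) (X2 i) = invOn (Ki i) (B2 i) + R i := by
    intro i
    have hG : SPDOn (Ki i) (invOn (Ki i) (B2 i) + R i) :=
      (hB2 i).invOn_spd.add_psd (hRpsd i) (hRsand i)
    have hF : Fmap Ki B2 X2 i = invOn (Ki i) (invOn (Ki i) (B2 i) + R i) := rfl
    rw [hfix2 i, hF]
    exact hG.invOn_invOn
  -- a uniform ε with ε • Q i ⪯ invOn (B1 i)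
  choose εf hεfpos hεfQ using fun i => exists_eps (hB1 i).invOn_spd (hQpsd i) (hQsand i)
  have hIne : (Finset.univ : Finset I).Nonempty := Finset.univ_nonempty
  set ε : ℝ := Finset.univ.inf' hIne εf with hε
  have hεpos : 0 < ε := by
    obtain ⟨i0, -, hi0⟩ := Finset.exists_mem_eq_inf' hIne εf
    rw [hε, hi0]
    exact hεfpos i0
  have hεQ : ∀ i, (invOn (Ki i) (B1 i) - ε • Q i).PosSemidef := by
    intro i
    have h2 : ((εf i - ε) • Q i).PosSemidef := by
      apply psd_smul _ _ (hQpsd i)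
      have := Finset.inf'_le εf (Finset.mem_univ i)
      rw [← hε] at this
      linarith
    have h3 := (hεfQ i).add h2
    convert h3 using 1
    module
  set lam : ℝ := 1 / (1 + ε) with hlam
  have hlam0 : 0 < lam := by rw [hlam]; positivity
  have hlam1 : lam < 1 := by
    rw [hlam, div_lt_one] <;> linarith
  have hlamε : 1 - lam = lam * ε := by
    rw [hlam, div_mul_eq_mul_div, one_mul, eq_div_iff (by linarith), sub_mul, one_div,
      inv_mul_cancel₀ (by linarith)]
    ring
  -- the order comparison set
  have hherm : ∀ (t : ℝ) (i : I), (t • X2 i - X1 i).IsHermitian := by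
    intro t i
    show _ᴴ = _
    rw [conjTranspose_sub, conjTranspose_smul, (hX2 i).1.1, (hX1 i).1.1]
    simp [star]
  set T : Set ℝ := {t | 1 ≤ t ∧ ∀ i, (t • X2 i - X1 i).PosSemidef} with hT
  have hTmem : ∀ t : ℝ, t ∈ T ↔ 1 ≤ t ∧ ∀ (i : I) (x : K → ℝ),
      0 ≤ x ⬝ᵥ ((t • X2 i - X1 i) *ᵥ x) := by
    intro t
    constructor
    · rintro ⟨h1, h2⟩; exact ⟨h1, fun i x => by simpa using (h2 i).dotProduct_mulVec_nonneg x⟩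
    · rintro ⟨h1, h2⟩; exact ⟨h1, fun i => PosSemidef.of_dotProduct_mulVec_nonneg (hherm t i) fun x => by simpa using h2 i x⟩
  have hTclosed : IsClosed T := by
    have hrepr : T = {t : ℝ | 1 ≤ t} ∩
        ⋂ (i : I) (x : K → ℝ), {t | 0 ≤ x ⬝ᵥ ((t • X2 i - X1 i) *ᵥ x)} := by
      ext t
      rw [hTmem t]
      simp only [Set.mem_inter_iff, Set.mem_iInter, Set.mem_setOf_eq]
    rw [hrepr]
    apply IsClosed.inter
    · exact isClosed_le continuous_const continuous_id
    · apply isClosed_iInter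
      intro i
      apply isClosed_iInter
      intro x
      have hfun : (fun t : ℝ => x ⬝ᵥ ((t • X2 i - X1 i) *ᵥ x))
          = fun t : ℝ => t * (x ⬝ᵥ (X2 i *ᵥ x)) - x ⬝ᵥ (X1 i *ᵥ x) := by
        funext t
        rw [sub_mulVec, dotProduct_sub, smul_mulVec, dotProduct_smul, smul_eq_mul]
      apply isClosed_le continuous_const
      rw [hfun]
      exact (continuous_id.mul continuous_const).sub continuous_const
  -- T is nonempty
  choose δf hδfpos hδfX using fun i => exists_eps (hX2 i) (hX1 i).1 (hX1 i).sandwich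
  set t0 : ℝ := 1 + Finset.univ.sup' hIne (fun i => (δf i)⁻¹) with ht0
  have hsup_pos : 0 < Finset.univ.sup' hIne (fun i => (δf i)⁻¹) := by
    obtain ⟨i1⟩ := hI
    have := Finset.le_sup' (fun i => (δf i)⁻¹) (Finset.mem_univ i1)
    have h2 : (0:ℝ) < (δf i1)⁻¹ := by
      have := hδfpos i1; positivity
    linarith
  have hT0 : t0 ∈ T := by
    refine ⟨by rw [ht0]; linarith, fun i => ?_⟩
    have hd1 : ((δf i)⁻¹ • X2 i - X1 i).PosSemidef := by
      have h4 := psd_smul (δf i)⁻¹ (by have := hδfpos i; positivity) (hδfX i)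
      convert h4 using 1
      rw [smul_sub, smul_smul, inv_mul_cancel₀ (hδfpos i).ne', one_smul]
    have hd2 : ((t0 - (δf i)⁻¹) • X2 i).PosSemidef := by
      apply psd_smul _ _ (hX2 i).1
      have := Finset.le_sup' (fun i => (δf i)⁻¹) (Finset.mem_univ i)
      rw [ht0]
      linarith
    have h5 := hd1.add hd2
    convert h5 using 1
    module
  have hTbdd : BddBelow T := ⟨1, fun t ht => ht.1⟩
  set ts : ℝ := sInf T with hts
  have htsT : ts ∈ T := hTclosed.csInf_mem ⟨t0, hT0⟩ hTbdd
  -- the contraction step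
  have hstep : ∀ t, t ∈ T → (1 + lam * (t - 1)) ∈ T := by
    rintro t ⟨ht1, htX⟩
    have ht0' : (0:ℝ) < t := by linarith
    refine ⟨by nlinarith, fun i => ?_⟩
    set c : ℝ := 1 + lam * (t - 1) with hc
    have hc1 : 1 ≤ c := by nlinarith
    have hc0 : 0 < c := by linarith
    have hsum : (t • SY i - SX i).PosSemidef := by
      have he : t • SY i - SX i = ∑ j ∈ Finset.univ.erase i, (t • X2 j - X1 j) := by
        rw [Finset.sum_sub_distrib, ← Finset.smul_sum]
      rw [he]
      exact psd_sum _ _ fun j _ => htX j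
    have htSY : (t • SY i).PosDef := posdef_smul ht0' (hSY i)
    have hinv := inv_antitone (hSX i) htSY hsum
    have hsmulinv : (t • SY i)⁻¹ = t⁻¹ • (SY i)⁻¹ := by
      have : Invertible t := invertibleOfNonzero ht0'.ne'
      rw [Matrix.inv_smul (A := SY i) t (hSY i).isUnit_det', invOf_eq_inv]
    rw [hsmulinv] at hinv
    have hQR : (Q i - t⁻¹ • R i).PosSemidef := by
      have h6 := psd_conj_proj (S := Ki i) hinv
      have heq : proj K (Ki i) * ((SX i)⁻¹ - t⁻¹ • (SY i)⁻¹) * proj K (Ki i)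
          = Q i - t⁻¹ • R i := by
        rw [Matrix.mul_sub, Matrix.sub_mul, Matrix.mul_smul, Matrix.smul_mul]
      rwa [heq] at h6
    have hRtQ : (t • Q i - R i).PosSemidef := by
      have h7 := psd_smul t ht0'.le hQR
      convert h7 using 1
      rw [smul_sub, smul_smul, mul_inv_cancel₀ ht0'.ne', one_smul]
    have hBanti := (hB1 i).invOn_antitone (hB2 i) (hB i)
    have ha : (invOn (Ki i) (B1 i) + t • Q i - invOn (Ki i) (X2 i)).PosSemidef := by
      have h8 := hBanti.add hRtQ
      rw [hA2 i]
      convert h8 using 1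
      module
    have hb : (lam • (invOn (Ki i) (B1 i) + Q i) - Q i).PosSemidef := by
      have h9 := psd_smul lam hlam0.le (hεQ i)
      have hz : lam + lam * ε - 1 = 0 := by linarith [hlamε]
      have hid : lam • (invOn (Ki i) (B1 i) + Q i) - Q i
          = lam • (invOn (Ki i) (B1 i) - ε • Q i) + (lam + lam * ε - 1) • Q i := by
        module
      rw [hid, hz, zero_smul, add_zero]
      exact h9
    have hcdiff : (c • (invOn (Ki i) (B1 i) + Q i)
        - (invOn (Ki i) (B1 i) + t • Q i)).PosSemidef := by
      have h10 := psd_smul (t - 1) (by linarith) hb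
      convert h10 using 1
      rw [hc]
      module
    have hkey : (c • invOn (Ki i) (X1 i) - invOn (Ki i) (X2 i)).PosSemidef := by
      have h11 := ha.add hcdiff
      rw [hA1 i]
      convert h11 using 1
      module
    have hscale : invOn (Ki i) (c⁻¹ • X1 i) = c • invOn (Ki i) (X1 i) := by
      rw [(hX1 i).invOn_smul (show (0:ℝ) < c⁻¹ by positivity), inv_inv]
    have hSPD1 : SPDOn (Ki i) (c⁻¹ • X1 i) := (hX1 i).smul (by positivity)
    have hanti2 := (hX2 i).invOn_spd.invOn_antitone hSPD1.invOn_spd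
      (by rw [hscale]; exact hkey)
    rw [(hX2 i).invOn_invOn, hSPD1.invOn_invOn] at hanti2
    have h12 := psd_smul c hc0.le hanti2
    convert h12 using 1
    rw [smul_sub, smul_smul, mul_inv_cancel₀ hc0.ne', one_smul]
  have h1 : ts ≤ 1 + lam * (ts - 1) := csInf_le hTbdd (hstep ts htsT)
  have hts1 : 1 ≤ ts := htsT.1
  have hts_le : ts ≤ 1 := by nlinarith
  have hts_eq : ts = 1 := le_antisymm hts_le hts1
  intro i
  have hfin := htsT.2 i
  rw [hts_eq, one_smul] at hfin
  exact hfin
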